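/- For every integer t ≥ 1, the complete graph K_{2t+2} on 2t+2 vertices has circular flow number F_c(K_{2t+2}) = 2 + 2/t. -/

import Mathlib

structure Multigraph where
  V : Type
  E : Type
  [finV : Finite V]
  [finE : Finite E]
  fst : E → V
  snd : E → V

attribute [instance] Multigraph.finV Multigraph.finE

namespace Multigraph

/-- The degree of a vertex (loops count twice). -/
noncomputable def degree (G : Multigraph) (v : G.V) : ℕ :=
  Nat.card {e : G.E // G.fst e = v} + Nat.card {e : G.E // G.snd e = v}

def IsRegular (G : Multigraph) (k : ℕ) : Prop := ∀ v, G.degree v = k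

/-- `φ` is a nowhere-zero `r`-flow: values have absolute value in `[1, r-1]`
(the sign of `φ e` encodes the chosen orientation of `e`), and flow is conserved
at every vertex. -/
def IsNowhereZeroFlow (G : Multigraph) (r : ℝ) (φ : G.E → ℝ) : Prop :=
  (∀ e, 1 ≤ |φ e| ∧ |φ e| ≤ r - 1) ∧
  ∀ v : G.V, (∑ᶠ e ∈ {e : G.E | G.fst e = v}, φ e) = ∑ᶠ e ∈ {e : G.E | G.snd e = v}, φ e

def HasNowhereZeroFlow (G : Multigraph) (r : ℝ) : Prop := ∃ φ, G.IsNowhereZeroFlow r φ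

/-- The circular flow number, `⊤` if `G` has no nowhere-zero flow. -/
noncomputable def flowNumber (G : Multigraph) : EReal :=
  sInf {x : EReal | ∃ r : ℝ, x = (r : EReal) ∧ G.HasNowhereZeroFlow r}

def Bipartite (G : Multigraph) : Prop :=
  ∃ c : G.V → Bool, ∀ e, c (G.fst e) ≠ c (G.snd e)

def IsOneFactor (G : Multigraph) (F : Set G.E) : Prop :=
  (∀ e ∈ F, G.fst e ≠ G.snd e) ∧
  ∀ v : G.V, ∃! e : G.E, e ∈ F ∧ (G.fst e = v ∨ G.snd e = v)

/-- `G - F` is bipartite. -/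
def BipartiteWithout (G : Multigraph) (F : Set G.E) : Prop :=
  ∃ c : G.V → Bool, ∀ e ∉ F, c (G.fst e) ≠ c (G.snd e)

def IsProperEdgeColoring (G : Multigraph) {n : ℕ} (c : G.E → Fin n) : Prop :=
  ∀ e₁ e₂ : G.E, e₁ ≠ e₂ →
    (G.fst e₁ = G.fst e₂ ∨ G.fst e₁ = G.snd e₂ ∨ G.snd e₁ = G.fst e₂ ∨ G.snd e₁ = G.snd e₂) →
    c e₁ ≠ c e₂

noncomputable def edgeChromaticNumber (G : Multigraph) : ℕ :=
  sInf {n : ℕ | ∃ c : G.E → Fin n, G.IsProperEdgeColoring c}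

def edgeBoundary (G : Multigraph) (X : Set G.V) : Set G.E :=
  {e | (G.fst e ∈ X) ≠ (G.snd e ∈ X)}

def IsBalancedValuation (G : Multigraph) (w : G.V → ℝ) : Prop :=
  ∀ X : Set G.V, |∑ᶠ v ∈ X, w v| ≤ (G.edgeBoundary X).ncard

end Multigraph

/-- The complete graph on `n` vertices, as a multigraph. -/
def completeMultigraph (n : ℕ) : Multigraph where
  V := Fin n
  E := {p : Fin n × Fin n // p.1 < p.2}
  fst p := p.val.1
  snd p := p.val.2


open Finset


abbrev EK (n : ℕ) := {p : Fin n × Fin n // p.1 < p.2}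

lemma sum_EK (n : ℕ) (F : EK n → ℝ) :
    ∑ e : EK n, F e
      = ∑ i : Fin n, ∑ j : Fin n, if h : i < j then F ⟨(i,j), h⟩ else 0 := by
  classical
  have h1 : ∑ p : Fin n × Fin n, (if h : p.1 < p.2 then F ⟨p, h⟩ else 0)
      = ∑ i : Fin n, ∑ j : Fin n, (if h : i < j then F ⟨(i,j), h⟩ else 0) :=
    Fintype.sum_prod_type _
  rw [← h1]
  have h2 : ∑ p ∈ Finset.univ.filter (fun p : Fin n × Fin n => p.1 < p.2),
        (if h : p.1 < p.2 then F ⟨p, h⟩ else 0)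
      = ∑ p : Fin n × Fin n, (if h : p.1 < p.2 then F ⟨p, h⟩ else 0) :=
    Finset.sum_filter_of_ne (fun p _ hne => by by_contra hc; exact hne (dif_neg hc))
  rw [← h2]
  refine Finset.sum_bij' (fun (e : EK n) (_ : e ∈ Finset.univ) => e.val)
    (fun p hp => (⟨p, by simpa using hp⟩ : EK n)) ?hi ?hj ?left ?right ?h
  case hi => intro e _; simp [e.prop]
  case hj => intro p hp; exact Finset.mem_univ _
  case left => intro e _; rfl
  case right => intro p hp; rfl
  case h => intro e _; rw [dif_pos e.prop]


lemma L1 (n : ℕ) (φ : (completeMultigraph n).E → ℝ) (v : Fin n) :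
    (∑ᶠ e ∈ {e : (completeMultigraph n).E | (completeMultigraph n).fst e = v}, φ e)
      = ∑ u : Fin n, if h : v < u then φ ⟨((v,u) : Fin n × Fin n), h⟩ else 0 := by
  classical
  show (∑ᶠ e ∈ {e : EK n | e.val.1 = v}, φ e)
      = ∑ u : Fin n, if h : v < u then φ ⟨((v,u) : Fin n × Fin n), h⟩ else 0
  have hset : {e : EK n | e.val.1 = v}
      = ↑((Finset.univ : Finset (EK n)).filter (fun e => e.val.1 = v)) := by
    ext e; simp
  rw [hset]
  refine (finsum_mem_coe_finset (fun e : EK n => φ e) _).trans ?_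
  refine (Finset.sum_filter _ (fun e : EK n => φ e)).trans ?_
  refine (sum_EK n (fun e => if e.val.1 = v then φ e else 0)).trans ?_
  have key : ∀ i : Fin n,
      (∑ j : Fin n, if h : i < j then (if (⟨(i,j),h⟩ : EK n).val.1 = v then φ ⟨(i,j),h⟩ else 0) else 0)
      = if i = v then (∑ j : Fin n, if h : i < j then φ ⟨(i,j),h⟩ else 0) else 0 := by
    intro i
    by_cases hi : i = v
    · subst hi; simp
    · simp only [hi, if_false]
      apply Finset.sum_eq_zero
      intro j _
      split_ifs with h1 <;> simp [hi]
  rw [Finset.sum_congr rfl (fun i _ => key i), Finset.sum_ite_eq' Finset.univ v, if_pos (Finset.mem_univ v)]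

lemma L2 (n : ℕ) (φ : (completeMultigraph n).E → ℝ) (v : Fin n) :
    (∑ᶠ e ∈ {e : (completeMultigraph n).E | (completeMultigraph n).snd e = v}, φ e)
      = ∑ u : Fin n, if h : u < v then φ ⟨((u,v) : Fin n × Fin n), h⟩ else 0 := by
  classical
  show (∑ᶠ e ∈ {e : EK n | e.val.2 = v}, φ e)
      = ∑ u : Fin n, if h : u < v then φ ⟨((u,v) : Fin n × Fin n), h⟩ else 0
  have hset : {e : EK n | e.val.2 = v}
      = ↑((Finset.univ : Finset (EK n)).filter (fun e => e.val.2 = v)) := by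
    ext e; simp
  rw [hset]
  refine (finsum_mem_coe_finset (fun e : EK n => φ e) _).trans ?_
  refine (Finset.sum_filter _ (fun e : EK n => φ e)).trans ?_
  refine (sum_EK n (fun e => if e.val.2 = v then φ e else 0)).trans ?_
  have key : ∀ i : Fin n,
      (∑ j : Fin n, if h : i < j then (if (⟨(i,j),h⟩ : EK n).val.2 = v then φ ⟨(i,j),h⟩ else 0) else 0)
      = if h : i < v then φ ⟨(i,v),h⟩ else 0 := by
    intro i
    rw [Finset.sum_eq_single v]
    · simp
    · intro j _ hj
      split_ifs with h1 <;> simp [hj]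
    · intro hv; exact absurd (Finset.mem_univ v) hv
  rw [Finset.sum_congr rfl (fun i _ => key i)]



noncomputable def gf (t : ℕ) (v u : ℕ) : ℝ :=
  if v % 2 = u % 2 then (if u < v then (t+1 : ℝ) else -(t+1))
  else ((if v < u then (t+1:ℝ) else -(t+1)) + (if v % 2 = 1 then 1 else -1))

lemma gf_antisymm (t : ℕ) {v u : ℕ} (h : v ≠ u) : gf t u v = - gf t v u := by
  unfold gf
  split_ifs <;> first | (exfalso; omega) | ring1

lemma gf_diag (t v : ℕ) : gf t v v = -(t+1:ℝ) := by simp [gf]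

lemma gf_bound (t : ℕ) {v u : ℕ} (h : v ≠ u) :
    (t:ℝ) ≤ |gf t v u| ∧ |gf t v u| ≤ t + 2 := by
  have h0 : (0:ℝ) ≤ t := Nat.cast_nonneg t
  unfold gf
  split_ifs <;> constructor <;>
    first
    | (rw [abs_of_nonneg (by linarith)]; linarith)
    | (rw [abs_of_nonpos (by linarith)]; linarith)

lemma sum_range_double (m : ℕ) (f : ℕ → ℝ) :
    ∑ u ∈ Finset.range (2*m), f u = ∑ k ∈ Finset.range m, (f (2*k) + f (2*k+1)) := by
  induction m with
  | zero => simp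
  | succ m ih =>
      rw [Finset.sum_range_succ, ← ih, show 2*(m+1) = (2*m)+1+1 by ring,
        Finset.sum_range_succ, Finset.sum_range_succ]
      ring

lemma gf_row (t : ℕ) {v : ℕ} (hv : v < 2*t+2) :
    ∑ u ∈ Finset.range (2*t+2), gf t v u = -(t+1:ℝ) := by
  rw [show 2*t+2 = 2*(t+1) by ring, sum_range_double]
  rcases Nat.even_or_odd v with he | ho
  · have h1 : v % 2 = 0 := Nat.even_iff.mp he
    have hp : ∀ k ∈ Finset.range (t+1), gf t v (2*k) + gf t v (2*k+1) = -1 := by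
      intro k _
      unfold gf
      split_ifs <;> first | (exfalso; omega) | ring1
    rw [Finset.sum_congr rfl hp]
    simp [Finset.sum_const]
  · have h1 : v % 2 = 1 := Nat.odd_iff.mp ho
    have hp : ∀ k ∈ Finset.range (t+1), gf t v (2*k) + gf t v (2*k+1)
        = (1:ℝ) + (if k = v / 2 then -2*((t:ℝ)+1) else 0) := by
      intro k _
      unfold gf
      split_ifs <;> first | (exfalso; omega) | ring1
    rw [Finset.sum_congr rfl hp, Finset.sum_add_distrib, Finset.sum_const,
      Finset.sum_ite_eq' (Finset.range (t+1)) (v/2) (fun _ => -2*((t:ℝ)+1)),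
      if_pos (by simp; omega : v/2 ∈ Finset.range (t+1))]
    simp
    ring


noncomputable def phiK (t : ℕ) : (completeMultigraph (2*t+2)).E → ℝ :=
  fun e => gf t ((e : EK (2*t+2)).val.1 : ℕ) ((e : EK (2*t+2)).val.2 : ℕ) / t

lemma upper_cons (t : ℕ) (ht : 1 ≤ t) (v : Fin (2*t+2)) :
    (∑ᶠ e ∈ {e : (completeMultigraph (2*t+2)).E | (completeMultigraph (2*t+2)).fst e = v}, phiK t e)
    = ∑ᶠ e ∈ {e : (completeMultigraph (2*t+2)).E | (completeMultigraph (2*t+2)).snd e = v}, phiK t e := by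
  classical
  have htpos : (0:ℝ) < t := by exact_mod_cast Nat.pos_of_ne_zero (by omega)
  rw [L1, L2]
  have e1 : ∀ u : Fin (2*t+2),
      (if h : v < u then phiK t ⟨(v,u),h⟩ else 0)
      = (if v < u then gf t (v:ℕ) (u:ℕ) else 0) / t := by
    intro u; by_cases h : v < u <;> simp [h, phiK]
  have e2 : ∀ u : Fin (2*t+2),
      (if h : u < v then phiK t ⟨(u,v),h⟩ else 0)
      = (-(if u < v then gf t (v:ℕ) (u:ℕ) else 0)) / t := by
    intro u; by_cases h : u < v
    · have hne : (v:ℕ) ≠ (u:ℕ) := Nat.ne_of_gt h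
      simp [h, phiK, gf_antisymm t hne]
    · simp [h]
  rw [Finset.sum_congr rfl (fun u _ => e1 u), Finset.sum_congr rfl (fun u _ => e2 u),
    ← Finset.sum_div, ← Finset.sum_div]
  have hrowFin : ∑ u : Fin (2*t+2), gf t (v:ℕ) (u:ℕ) = -((t:ℝ)+1) := by
    rw [Fin.sum_univ_eq_sum_range (fun u => gf t (v:ℕ) u) (2*t+2)]
    exact gf_row t v.isLt
  have hsplit : ∀ u : Fin (2*t+2), gf t (v:ℕ) (u:ℕ)
      = (if v < u then gf t (v:ℕ) (u:ℕ) else 0) + (if u < v then gf t (v:ℕ) (u:ℕ) else 0)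
        + (if u = v then gf t (v:ℕ) (u:ℕ) else 0) := by
    intro u
    rcases lt_trichotomy v u with h|h|h
    · simp [h, lt_asymm h, h.ne']
    · subst h; simp
    · simp [h, lt_asymm h, h.ne]
  rw [Finset.sum_congr rfl (fun u _ => hsplit u), Finset.sum_add_distrib,
    Finset.sum_add_distrib, Finset.sum_ite_eq' Finset.univ v, if_pos (Finset.mem_univ v),
    gf_diag] at hrowFin
  have : (∑ u : Fin (2*t+2), if v < u then gf t (v:ℕ) (u:ℕ) else 0)
      = -(∑ u : Fin (2*t+2), if u < v then gf t (v:ℕ) (u:ℕ) else 0) := by linarith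
  rw [this, ← Finset.sum_neg_distrib]

lemma upper (t : ℕ) (ht : 1 ≤ t) :
    (completeMultigraph (2*t+2)).HasNowhereZeroFlow (2 + 2/(t:ℝ)) := by
  classical
  have htpos : (0:ℝ) < t := by exact_mod_cast Nat.pos_of_ne_zero (by omega)
  refine ⟨phiK t, ?_, fun v => upper_cons t ht v⟩
  intro e
  have hij : ((e : EK (2*t+2)).val.1 : ℕ) ≠ ((e : EK (2*t+2)).val.2 : ℕ) :=
    Nat.ne_of_lt (e : EK (2*t+2)).prop
  obtain ⟨hb1, hb2⟩ := gf_bound t hij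
  have heq : (2 + 2/(t:ℝ) - 1) * t = t + 2 := by field_simp; ring
  unfold phiK
  constructor
  · rw [abs_div, abs_of_pos htpos, le_div_iff₀ htpos]; linarith
  · rw [abs_div, abs_of_pos htpos, div_le_iff₀ htpos]; linarith



lemma core (t : ℕ) (ht : 1 ≤ t) (r : ℝ) (g : Fin (2*t+2) → Fin (2*t+2) → ℝ)
    (hanti : ∀ v u, g u v = - g v u)
    (hb1 : ∀ v u, v ≠ u → 1 ≤ |g v u|) (hb2 : ∀ v u, v ≠ u → |g v u| ≤ r - 1)
    (hrow : ∀ v, ∑ u, g v u = 0)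
    (X : Finset (Fin (2*t+2)))
    (hX : ∀ v ∈ X, (∑ u : Fin (2*t+2), if g v u < 0 then (1:ℕ) else 0)
          < (∑ u : Fin (2*t+2), if 0 < g v u then (1:ℕ) else 0))
    (hcard : t+1 ≤ X.card) : 2 + 2/(t:ℝ) ≤ r := by
  classical
  have hdiag : ∀ v, g v v = 0 := fun v => by have := hanti v v; linarith
  have hsign : ∀ v u, v ≠ u → (0 < g v u ∨ g v u < 0) := by
    intro v u h
    have h1 := hb1 v u h
    rcases abs_cases (g v u) with ⟨h2,h3⟩|⟨h2,h3⟩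
    · left; linarith
    · right; linarith
  set A := ∑ v ∈ X, ∑ u ∈ Xᶜ, (if 0 < g v u then (1:ℕ) else 0) with hA
  set B := ∑ v ∈ X, ∑ u ∈ Xᶜ, (if g v u < 0 then (1:ℕ) else 0) with hB
  -- internal positive = internal negative
  have hPN : (∑ v ∈ X, ∑ u ∈ X, (if 0 < g v u then (1:ℕ) else 0))
      = ∑ v ∈ X, ∑ u ∈ X, (if g v u < 0 then (1:ℕ) else 0) := by
    rw [Finset.sum_comm]
    apply Finset.sum_congr rfl; intro a _
    apply Finset.sum_congr rfl; intro b _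
    rw [hanti b a]
    simp [neg_pos]
  -- A ≥ B + X.card
  have hsplitP : A + (∑ v ∈ X, ∑ u ∈ X, (if 0 < g v u then (1:ℕ) else 0))
      = ∑ v ∈ X, ∑ u : Fin (2*t+2), (if 0 < g v u then (1:ℕ) else 0) := by
    rw [hA, ← Finset.sum_add_distrib]
    apply Finset.sum_congr rfl; intro v _
    rw [add_comm, Finset.sum_add_sum_compl]
  have hsplitN : B + (∑ v ∈ X, ∑ u ∈ X, (if g v u < 0 then (1:ℕ) else 0))
      = ∑ v ∈ X, ∑ u : Fin (2*t+2), (if g v u < 0 then (1:ℕ) else 0) := by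
    rw [hB, ← Finset.sum_add_distrib]
    apply Finset.sum_congr rfl; intro v _
    rw [add_comm, Finset.sum_add_sum_compl]
  have hdsum : (∑ v ∈ X, ∑ u : Fin (2*t+2), (if g v u < 0 then (1:ℕ) else 0)) + X.card
      ≤ ∑ v ∈ X, ∑ u : Fin (2*t+2), (if 0 < g v u then (1:ℕ) else 0) := by
    have : ∑ v ∈ X, ((∑ u : Fin (2*t+2), (if g v u < 0 then (1:ℕ) else 0)) + 1)
        ≤ ∑ v ∈ X, ∑ u : Fin (2*t+2), (if 0 < g v u then (1:ℕ) else 0) :=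
      Finset.sum_le_sum (fun v hv => hX v hv)
    rw [Finset.sum_add_distrib, Finset.sum_const, smul_eq_mul, mul_one] at this
    exact this
  have hAB : B + X.card ≤ A := by omega
  -- A + B = X.card * Xᶜ.card
  have hABsum : A + B = X.card * Xᶜ.card := by
    rw [hA, hB, ← Finset.sum_add_distrib]
    have hthis : ∀ v ∈ X, ((∑ u ∈ Xᶜ, (if 0 < g v u then (1:ℕ) else 0))
        + ∑ u ∈ Xᶜ, (if g v u < 0 then (1:ℕ) else 0)) = Xᶜ.card := by
      intro v hv
      rw [← Finset.sum_add_distrib]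
      have hone : ∀ u ∈ Xᶜ, ((if 0 < g v u then (1:ℕ) else 0) + if g v u < 0 then 1 else 0) = 1 := by
        intro u hu
        have hne : v ≠ u := fun h => (Finset.mem_compl.mp hu) (h ▸ hv)
        rcases hsign v u hne with hp|hp
        · simp [hp, asymm hp]
        · simp [hp, asymm hp]
      rw [Finset.sum_congr rfl hone, Finset.sum_const, smul_eq_mul, mul_one]
    rw [Finset.sum_congr rfl hthis, Finset.sum_const, smul_eq_mul]
  -- real: cross flow is zero
  have hTzero : (∑ v ∈ X, ∑ u ∈ X, g v u) = 0 := by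
    have h1 : (∑ v ∈ X, ∑ u ∈ X, g v u) = -(∑ v ∈ X, ∑ u ∈ X, g v u) := by
      conv_lhs => rw [Finset.sum_comm]
      rw [← Finset.sum_neg_distrib]
      apply Finset.sum_congr rfl; intro a _
      rw [← Finset.sum_neg_distrib]
      exact Finset.sum_congr rfl (fun b _ => hanti a b)
    linarith
  have hS0 : (∑ v ∈ X, ∑ u ∈ Xᶜ, g v u) = 0 := by
    have h2 : ∑ v ∈ X, ((∑ u ∈ X, g v u) + (∑ u ∈ Xᶜ, g v u)) = 0 :=
      Finset.sum_eq_zero (fun v _ => by rw [Finset.sum_add_sum_compl]; exact hrow v)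
    rw [Finset.sum_add_distrib] at h2
    linarith [hTzero]
  -- bound the cross flow from below
  have hSbound : (A:ℝ) - (B:ℝ)*(r-1) ≤ 0 := by
    have hpt : ∀ v ∈ X, ∀ u ∈ Xᶜ,
        ((if 0 < g v u then (1:ℝ) else 0) - (if g v u < 0 then (r-1) else 0)) ≤ g v u := by
      intro v hv u hu
      have hne : v ≠ u := fun h => (Finset.mem_compl.mp hu) (h ▸ hv)
      rcases hsign v u hne with hp|hp
      · have h1 := hb1 v u hne; rw [abs_of_pos hp] at h1
        simp [hp, asymm hp]; linarith
      · have h1 := hb2 v u hne; rw [abs_of_neg hp] at h1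
        simp [hp, asymm hp]; linarith
    have h3 : (∑ v ∈ X, ∑ u ∈ Xᶜ,
        ((if 0 < g v u then (1:ℝ) else 0) - (if g v u < 0 then (r-1) else 0)))
        ≤ ∑ v ∈ X, ∑ u ∈ Xᶜ, g v u :=
      Finset.sum_le_sum (fun v hv => Finset.sum_le_sum (fun u hu => hpt v hv u hu))
    rw [hS0] at h3
    have hcastA : (A:ℝ) = ∑ v ∈ X, ∑ u ∈ Xᶜ, (if 0 < g v u then (1:ℝ) else 0) := by
      rw [hA, Nat.cast_sum]
      apply Finset.sum_congr rfl; intro v _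
      rw [Nat.cast_sum]
      apply Finset.sum_congr rfl; intro u _
      split_ifs <;> simp
    have hcastB : (B:ℝ)*(r-1) = ∑ v ∈ X, ∑ u ∈ Xᶜ, (if g v u < 0 then (r-1) else 0) := by
      rw [hB, Nat.cast_sum, Finset.sum_mul]
      apply Finset.sum_congr rfl; intro v _
      rw [Nat.cast_sum, Finset.sum_mul]
      apply Finset.sum_congr rfl; intro u _
      split_ifs <;> simp
    calc (A:ℝ) - (B:ℝ)*(r-1) = ∑ v ∈ X, ∑ u ∈ Xᶜ,
          ((if 0 < g v u then (1:ℝ) else 0) - (if g v u < 0 then (r-1) else 0)) := by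
            rw [hcastA, hcastB, ← Finset.sum_sub_distrib]
            apply Finset.sum_congr rfl; intro v _
            rw [← Finset.sum_sub_distrib]
      _ ≤ 0 := h3
  -- final numeric argument
  have hB1 : 1 ≤ B := by
    rcases Nat.eq_zero_or_pos B with h0|h
    · exfalso
      rw [h0] at hSbound
      push_cast at hSbound
      have hA0 : A = 0 := by
        have h1 : (A:ℝ) = 0 := le_antisymm (by linarith) (Nat.cast_nonneg A)
        exact_mod_cast h1
      omega
    · exact h
  have hxle : X.card ≤ 2*t+2 := le_trans (Finset.card_le_univ X) (by simp)
  have hycn : Xᶜ.card ≤ t+1 := by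
    rw [Finset.card_compl, Fintype.card_fin]
    omega
  have hxc : (t:ℝ)+1 ≤ (X.card : ℝ) := by exact_mod_cast hcard
  have hABr : (B:ℝ) + (X.card:ℝ) ≤ (A:ℝ) := by exact_mod_cast hAB
  have hABsumr : (A:ℝ) + (B:ℝ) = (X.card:ℝ) * (Xᶜ.card:ℝ) := by exact_mod_cast hABsum
  have hyc : (Xᶜ.card : ℝ) ≤ (t:ℝ) + 1 := by exact_mod_cast hycn
  have hb1r : (1:ℝ) ≤ (B:ℝ) := by exact_mod_cast hB1
  have htr : (1:ℝ) ≤ (t:ℝ) := by exact_mod_cast ht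
  have tpos : (0:ℝ) < t := by linarith
  have h2b : 2*(B:ℝ) ≤ (X.card:ℝ) * ((Xᶜ.card:ℝ) - 1) := by nlinarith
  have h2b' : 2*(B:ℝ) ≤ (X.card:ℝ) * (t:ℝ) := by
    have := mul_le_mul_of_nonneg_left (by linarith : (Xᶜ.card:ℝ) - 1 ≤ (t:ℝ))
      (Nat.cast_nonneg _ : (0:ℝ) ≤ (X.card:ℝ))
    linarith
  have key : ((t:ℝ)+2)*(B:ℝ) ≤ ((r-1)*(t:ℝ))*(B:ℝ) := by
    have h4 : ((B:ℝ) + (X.card:ℝ)) * (t:ℝ) ≤ ((r-1)*(B:ℝ))*(t:ℝ) :=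
      mul_le_mul_of_nonneg_right (by linarith) (le_of_lt tpos)
    nlinarith [h2b']
  have h5 : (t:ℝ)+2 ≤ (r-1)*(t:ℝ) :=
    le_of_mul_le_mul_right key (by linarith : (0:ℝ) < (B:ℝ))
  have h7 : ((t:ℝ)+2)/(t:ℝ) = 1 + 2/(t:ℝ) := by field_simp
  have h6 : ((t:ℝ)+2)/(t:ℝ) ≤ r - 1 := by rw [div_le_iff₀ tpos]; linarith
  linarith

lemma lower (t : ℕ) (ht : 1 ≤ t) (r : ℝ)
    (hflow : (completeMultigraph (2*t+2)).HasNowhereZeroFlow r) : 2 + 2/(t:ℝ) ≤ r := by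
  classical
  obtain ⟨φ, hb, hcons⟩ := hflow
  set g : Fin (2*t+2) → Fin (2*t+2) → ℝ := fun v u =>
    if h : v < u then φ ⟨(v,u), h⟩ else if h' : u < v then -φ ⟨(u,v), h'⟩ else 0 with hg
  have hanti : ∀ v u, g u v = - g v u := by
    intro v u
    rcases lt_trichotomy v u with h|h|h
    · simp only [hg]; rw [dif_neg (asymm h), dif_pos h, dif_pos h]
    · subst h; simp [hg, lt_irrefl]
    · simp only [hg]; rw [dif_pos h, dif_neg (asymm h), dif_pos h]; ring
  have hbg : ∀ v u, v ≠ u → 1 ≤ |g v u| ∧ |g v u| ≤ r - 1 := by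
    intro v u hne
    rcases lt_trichotomy v u with h|h|h
    · simp only [hg]; rw [dif_pos h]; exact hb _
    · exact absurd h hne
    · simp only [hg]; rw [dif_neg (asymm h), dif_pos h, abs_neg]; exact hb _
  have hrow : ∀ v : Fin (2*t+2), ∑ u, g v u = 0 := by
    intro v
    have hsplit : ∀ u : Fin (2*t+2), g v u = (if h : v < u then φ ⟨(v,u),h⟩ else 0)
        + (-(if h : u < v then φ ⟨(u,v),h⟩ else 0)) := by
      intro u
      rcases lt_trichotomy v u with h|h|h
      · simp only [hg]; rw [dif_pos h, dif_pos h, dif_neg (asymm h)]; ring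
      · subst h; simp [hg]
      · simp only [hg]; rw [dif_neg (asymm h), dif_pos h, dif_neg (asymm h), dif_pos h]; ring
    have h1 := hcons v
    rw [L1, L2] at h1
    calc ∑ u, g v u
        = (∑ u : Fin (2*t+2), if h : v < u then φ ⟨(v,u),h⟩ else 0)
          - (∑ u : Fin (2*t+2), if h : u < v then φ ⟨(u,v),h⟩ else 0) := by
          rw [Finset.sum_congr rfl (fun u _ => hsplit u), Finset.sum_add_distrib,
            Finset.sum_neg_distrib]
          ring
      _ = 0 := by rw [h1]; ring
  have dcount : ∀ v : Fin (2*t+2),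
      (∑ u : Fin (2*t+2), if 0 < g v u then (1:ℕ) else 0)
      + (∑ u : Fin (2*t+2), if g v u < 0 then (1:ℕ) else 0) + 1 = 2*t+2 := by
    intro v
    have hdiag : g v v = 0 := by have := hanti v v; linarith
    have hsign : ∀ u, u ≠ v → 0 < g v u ∨ g v u < 0 := by
      intro u hu
      have h1 := (hbg v u (Ne.symm hu)).1
      rcases abs_cases (g v u) with ⟨h2,h3⟩|⟨h2,h3⟩
      · left; linarith
      · right; linarith
    have hpt : ∀ u : Fin (2*t+2), ((if 0 < g v u then (1:ℕ) else 0)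
        + (if g v u < 0 then 1 else 0)) + (if u = v then 1 else 0) = 1 := by
      intro u; by_cases h : u = v
      · subst h; simp [hdiag]
      · rcases hsign u h with hp|hp
        · simp [hp, asymm hp, h]
        · simp [hp, asymm hp, h]
    have h2 := Finset.sum_congr rfl
      (fun u (_ : u ∈ (Finset.univ : Finset (Fin (2*t+2)))) => hpt u)
    rw [Finset.sum_add_distrib, Finset.sum_add_distrib,
      Finset.sum_ite_eq' Finset.univ v, if_pos (Finset.mem_univ v), Finset.sum_const,
      Finset.card_univ, Fintype.card_fin, smul_eq_mul, mul_one] at h2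
    exact h2
  set X := Finset.univ.filter (fun v : Fin (2*t+2) =>
    (∑ u : Fin (2*t+2), if g v u < 0 then (1:ℕ) else 0)
      < ∑ u : Fin (2*t+2), if 0 < g v u then (1:ℕ) else 0) with hXdef
  by_cases hc : t+1 ≤ X.card
  · exact core t ht r g hanti (fun v u h => (hbg v u h).1) (fun v u h => (hbg v u h).2)
      hrow X (fun v hv => (Finset.mem_filter.mp hv).2) hc
  · refine core t ht r (fun v u => - g v u)
      (fun v u => by show -g u v = -(-g v u); rw [hanti v u])
      (fun v u h => by show 1 ≤ |(-g v u)|; rw [abs_neg]; exact (hbg v u h).1)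
      (fun v u h => by show |(-g v u)| ≤ r - 1; rw [abs_neg]; exact (hbg v u h).2)
      (fun v => by show (∑ u : Fin (2*t+2), -g v u) = 0
                   rw [Finset.sum_neg_distrib, hrow v, neg_zero]) Xᶜ ?_ ?_
    · intro v hv
      have hv' : ¬ ((∑ u : Fin (2*t+2), if g v u < 0 then (1:ℕ) else 0)
          < ∑ u : Fin (2*t+2), if 0 < g v u then (1:ℕ) else 0) := by
        intro hcon
        exact (Finset.mem_compl.mp hv) (by rw [hXdef]; exact Finset.mem_filter.mpr ⟨Finset.mem_univ v, hcon⟩)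
      have e1 : (∑ u : Fin (2*t+2), if -g v u < 0 then (1:ℕ) else 0)
          = ∑ u : Fin (2*t+2), if 0 < g v u then (1:ℕ) else 0 :=
        Finset.sum_congr rfl (fun u _ => by simp only [neg_lt_zero])
      have e2 : (∑ u : Fin (2*t+2), if 0 < -g v u then (1:ℕ) else 0)
          = ∑ u : Fin (2*t+2), if g v u < 0 then (1:ℕ) else 0 :=
        Finset.sum_congr rfl (fun u _ => by simp only [neg_pos])
      show (∑ u : Fin (2*t+2), if -g v u < 0 then (1:ℕ) else 0)
          < ∑ u : Fin (2*t+2), if 0 < -g v u then (1:ℕ) else 0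
      rw [e1, e2]
      have := dcount v
      omega
    · rw [Finset.card_compl, Fintype.card_fin]
      omega

theorem flowNumber_completeMultigraph (t : ℕ) (ht : 1 ≤ t) :
    (completeMultigraph (2 * t + 2)).flowNumber = ((2 + 2 / (t : ℝ) : ℝ) : EReal) := by
  unfold Multigraph.flowNumber
  apply le_antisymm
  · exact sInf_le ⟨2 + 2/(t:ℝ), rfl, upper t ht⟩
  · apply le_sInf
    rintro x ⟨r, rfl, hr⟩
    exact EReal.coe_le_coe_iff.mpr (lower t ht r hr)
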